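/- Let Ĥ be a finite abelian group with generators η₁, ..., η_r of orders s₁, ..., s_r acting by automorphisms on a ℂ-algebra A, let M be a finite-dimensional simple A-module with invertible operators T_j satisfying ρ(η_j(a)) = T_j ρ(a) T_j⁻¹, generating an action of a cyclotomic quantum torus R_q on M. Then in the isotypic decomposition M ≅ N ⊗ (⊕_α V^α) of M as an R_q-module, every α ∈ (ℂ*)^r with V^α ≠ 0 is of the form α_i = h(η_i) for some character h ∈ H = Hom(Ĥ, ℂ*). -/
import Mathlib


/-- Lemma 3.7 (Billig–Lau): let `M` be a finite-dimensional simple module over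
a ℂ-algebra `A`, let `η₁, …, η_r` be commuting finite-order automorphisms of
`A` implemented on `M` by invertible operators `T i` (so `T i (a • u) =
η i (a) • T i u`), which generate the action of a cyclotomic quantum torus on
`M`.  Let `N ⊆ M` be a simple quantum-torus submodule.  Then every `α ∈ (ℂ*)^r`
occurring in the isotypic decomposition of `M` — i.e. every `α` such that the
`α`-rescaled twist of `N` admits a nonzero quantum-torus homomorphism into `M`
— is of the form `α_i = h(η_i)` for some character `h` of the group `Ĥ`
generated by the `η_i`. -/
theorem isotypic_eigenvalues_are_characters
    {A M : Type*} [Ring A] [Algebra ℂ A]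
    [AddCommGroup M] [Module ℂ M] [Module A M] [IsScalarTower ℂ A M]
    [FiniteDimensional ℂ M] (hM : IsSimpleModule A M)
    {r : ℕ} (η : Fin r → A ≃ₐ[ℂ] A)
    (hcomm : ∀ i j, Commute (η i) (η j)) (hfin : ∀ i, IsOfFinOrder (η i))
    (T : Fin r → M ≃ₗ[ℂ] M)
    (hT : ∀ i, ∀ (a : A) (u : M), T i (a • u) = η i a • T i u)
    (N : Submodule ℂ M) (hNinv : ∀ i, ∀ u ∈ N, T i u ∈ N) (hNne : N ≠ ⊥)
    (hNsimple : ∀ W : Submodule ℂ M, W ≤ N →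
      (∀ i, ∀ u ∈ W, T i u ∈ W) → W = ⊥ ∨ W = N)
    (α : Fin r → ℂˣ)
    (hα : ∃ φ : N →ₗ[ℂ] M, φ ≠ 0 ∧
      ∀ i (u : N), (α i : ℂ) • φ ⟨T i (u : M), hNinv i u u.2⟩ = T i (φ u)) :
    ∃ h : ↥(Subgroup.closure (Set.range η)) →* ℂˣ,
      ∀ i, α i = h ⟨η i, Subgroup.subset_closure (Set.mem_range_self i)⟩ := by
  classical
  haveI := hM
  obtain ⟨φ₀, hφ0, hφrel⟩ := hα
  -- extend `φ₀` to a map on all of `M` via a projection onto `N`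
  obtain ⟨P, hP⟩ := Submodule.exists_isCompl N
  set φ : M →ₗ[ℂ] M := φ₀ ∘ₗ (N.linearProjOfIsCompl P hP) with hφdef
  have hφN : ∀ (u : M) (hu : u ∈ N), φ u = φ₀ ⟨u, hu⟩ := by
    intro u hu
    have : (N.linearProjOfIsCompl P hP) ((⟨u, hu⟩ : N) : M) = ⟨u, hu⟩ :=
      Submodule.linearProjOfIsCompl_apply_left hP ⟨u, hu⟩
    simp [hφdef, this]
  have hφT : ∀ i, ∀ u, ∀ hu : u ∈ N, (α i : ℂ) • φ (T i u) = T i (φ u) := by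
    intro i u hu
    rw [hφN _ (hNinv i u hu), hφN u hu]
    exact hφrel i ⟨u, hu⟩
  -- the ambient group and the subgroup generated by the pairs `(η i, α i)`
  set gen : Fin r → (A ≃ₐ[ℂ] A) × ℂˣ := fun i => (η i, α i) with hgen
  set K : Subgroup ((A ≃ₐ[ℂ] A) × ℂˣ) := Subgroup.closure (Set.range gen) with hK
  -- every element of `K` is implemented by an intertwiner on `M`
  have key : ∀ g ∈ K, ∃ S : M ≃ₗ[ℂ] M,
      (∀ (a : A) (u : M), S (a • u) = g.1 a • S u) ∧
      (∀ u ∈ N, S u ∈ N) ∧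
      (∀ u ∈ N, (g.2 : ℂ) • φ (S u) = S (φ u)) := by
    intro g hg
    induction hg using Subgroup.closure_induction with
    | mem x hx =>
        obtain ⟨i, rfl⟩ := hx
        exact ⟨T i, hT i, hNinv i, hφT i⟩
    | one =>
        exact ⟨LinearEquiv.refl ℂ M, by intro a u; rfl, fun u hu => hu, by
          intro u hu; simp⟩
    | mul x y hx hy ihx ihy =>
        obtain ⟨S, hS1, hS2, hS3⟩ := ihx
        obtain ⟨S', hS'1, hS'2, hS'3⟩ := ihy
        refine ⟨S' ≪≫ₗ S, ?_, ?_, ?_⟩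
        · intro a u
          simp only [LinearEquiv.trans_apply, hS'1, hS1]
          rfl
        · intro u hu
          exact hS2 _ (hS'2 u hu)
        · intro u hu
          have h1 := hS3 (S' u) (hS'2 u hu)
          have h2 := hS'3 u hu
          simp only [LinearEquiv.trans_apply]
          have hxy : ((x * y).2 : ℂ) = (y.2 : ℂ) * (x.2 : ℂ) := by
            simp [mul_comm]
          rw [hxy, mul_smul, h1, ← map_smul, h2]
    | inv x hx ih =>
        obtain ⟨S, hS1, hS2, hS3⟩ := ih
        have hSN : ∀ u ∈ N, S.symm u ∈ N := by
          intro u hu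
          have hres : Function.Surjective
              (S.toLinearMap.restrict (p := N) (q := N) (fun v hv => hS2 v hv)) := by
            rw [← LinearMap.injective_iff_surjective]
            intro a b hab
            have : S (a : M) = S (b : M) := congrArg Subtype.val hab
            exact Subtype.ext (S.injective this)
          obtain ⟨v, hv⟩ := hres ⟨u, hu⟩
          have hSv : S (v : M) = u := congrArg Subtype.val hv
          have : S.symm u = (v : M) := by
            rw [← hSv, LinearEquiv.symm_apply_apply]
          rw [this]; exact v.2
        refine ⟨S.symm, ?_, hSN, ?_⟩
        · intro a u
          apply S.injective
          rw [hS1, LinearEquiv.apply_symm_apply]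
          have : x.1 (x⁻¹.1 a) = a := by
            have : x.1 * x⁻¹.1 = 1 := by
              rw [show x⁻¹.1 = (x.1)⁻¹ from rfl, mul_inv_cancel]
            calc x.1 (x⁻¹.1 a) = (x.1 * x⁻¹.1) a := rfl
              _ = a := by rw [this]; rfl
          rw [this, LinearEquiv.apply_symm_apply]
        · intro u hu
          have h1 := hS3 (S.symm u) (hSN u hu)
          rw [LinearEquiv.apply_symm_apply] at h1
          have h2 : φ (S.symm u) = S.symm ((x.2 : ℂ) • φ u) := by
            rw [h1, LinearEquiv.symm_apply_apply]
          rw [h2, map_smul]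
          have hx2 : (x⁻¹.2 : ℂ) * (x.2 : ℂ) = 1 := by
            rw [show x⁻¹.2 = (x.2)⁻¹ from rfl, ← Units.val_mul, inv_mul_cancel,
              Units.val_one]
          rw [smul_smul, hx2, one_smul]
  -- Schur's lemma: a trivially-twisted pair in `K` has trivial scalar
  have triv : ∀ c : ℂˣ, ((1 : A ≃ₐ[ℂ] A), c) ∈ K → c = 1 := by
    intro c hc
    obtain ⟨S, hS1, hS2, hS3⟩ := key _ hc
    have hS1' : ∀ (a : A) (u : M), S (a • u) = a • S u := hS1
    haveI : Nontrivial M := IsSimpleModule.nontrivial A M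
    obtain ⟨μ, hμ⟩ := Module.End.exists_eigenvalue (S.toLinearMap : Module.End ℂ M)
    obtain ⟨v, hv⟩ := hμ.exists_hasEigenvector
    have hvS : S v = μ • v := hv.apply_eq_smul
    have hμ0 : μ ≠ 0 := by
      intro h
      apply hv.right
      have h0 : S v = 0 := by rw [hvS, h, zero_smul]
      exact S.injective (h0.trans (map_zero S).symm)
    -- the eigenspace is an `A`-submodule, hence all of `M`
    set W : Submodule A M :=
      { carrier := {u | S u = μ • u}
        add_mem' := by
          intro a b ha hb
          simp only [Set.mem_setOf_eq] at *
          rw [map_add, ha, hb, smul_add]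
        zero_mem' := by simp
        smul_mem' := by
          intro a u hu
          simp only [Set.mem_setOf_eq] at *
          rw [hS1', hu]
          exact (smul_comm μ a u).symm } with hW
    have hWne : W ≠ ⊥ := by
      intro h
      apply hv.right
      have hvW : v ∈ W := hvS
      rw [h] at hvW
      exact hvW
    have hWtop : W = ⊤ := (eq_bot_or_eq_top W).resolve_left hWne
    have hSall : ∀ u : M, S u = μ • u := by
      intro u
      have : u ∈ W := by rw [hWtop]; trivial
      exact this
    obtain ⟨n, hn⟩ := DFunLike.ne_iff.mp hφ0
    have hw : φ ((n : M)) ≠ 0 := by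
      rw [hφN (n : M) n.2]
      simpa using hn
    have h3 := hS3 (n : M) n.2
    rw [hSall ((n : M)), map_smul, hSall (φ (n : M))] at h3
    rw [smul_smul] at h3
    have hμc : (c : ℂ) * μ = μ := by
      by_contra hne
      exact hw (by
        have := sub_eq_zero.mpr h3
        rw [← sub_smul] at this
        rcases smul_eq_zero.mp this with h | h
        · exact absurd (sub_eq_zero.mp h) hne
        · exact absurd h hw)
    ext1
    exact mul_right_cancel₀ hμ0 (hμc.trans (one_mul μ).symm)
  -- build the character from the bijection `K ≃* ⟨η⟩`
  set F : (A ≃ₐ[ℂ] A) × ℂˣ →* (A ≃ₐ[ℂ] A) := MonoidHom.fst _ _ with hF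
  have hmap : Subgroup.map F K = Subgroup.closure (Set.range η) := by
    rw [hK, MonoidHom.map_closure]
    congr 1
    rw [← Set.range_comp]
    congr 1
  have hpinj : Function.Injective (F.subgroupMap K) := by
    rw [injective_iff_map_eq_one]
    intro k hk
    have h1 : F (k : (A ≃ₐ[ℂ] A) × ℂˣ) = 1 := congrArg Subtype.val hk
    have hkmem := k.2
    have hkeq : ((k : (A ≃ₐ[ℂ] A) × ℂˣ)) = ((1 : A ≃ₐ[ℂ] A), (k : (A ≃ₐ[ℂ] A) × ℂˣ).2) := by
      exact Prod.ext h1 rfl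
    rw [hkeq] at hkmem
    have hc := triv _ hkmem
    apply Subtype.ext
    rw [hkeq, hc]
    rfl
  have hpsurj := F.subgroupMap_surjective K
  set e : K ≃* ↥(Subgroup.closure (Set.range η)) :=
    (MulEquiv.ofBijective (F.subgroupMap K) ⟨hpinj, hpsurj⟩).trans
      (MulEquiv.subgroupCongr hmap) with he
  refine ⟨((MonoidHom.snd _ _).comp K.subtype).comp e.symm.toMonoidHom, fun i => ?_⟩
  have hgenK : gen i ∈ K := by
    rw [hK]
    exact Subgroup.subset_closure (Set.mem_range_self i)
  have heval : e ⟨gen i, hgenK⟩ =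
      ⟨η i, Subgroup.subset_closure (Set.mem_range_self i)⟩ := by
    apply Subtype.ext
    rfl
  have hsymm : e.symm ⟨η i, Subgroup.subset_closure (Set.mem_range_self i)⟩ =
      ⟨gen i, hgenK⟩ := by
    rw [MulEquiv.symm_apply_eq, heval]
  simp only [MonoidHom.comp_apply, MulEquiv.coe_toMonoidHom, hsymm]
  rfl
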